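/- Let n be an odd integer ≥ 1, r : Γ →* Spin(n) a homomorphism, ρ a standard-representation homomorphism for r, and η : Γ → {±1} a character. Then the following are equivalent: (i) for every γ ∈ Γ, the elements r(γ) and η(γ) • r(γ) of Spin(n) are conjugate in Spin(n); (ii) for every γ ∈ Γ, η(γ) is an eigenvalue of the linear map ρ(γ). -/

import Mathlib

/-- The standard positive-definite quadratic form `v ↦ ∑ i, (v i)^2` on `Fin n → ℝ`. -/
noncomputable def Qn (n : ℕ) : QuadraticForm ℝ (Fin n → ℝ) :=
  QuadraticMap.weightedSumSquares ℝ (fun _ : Fin n => (1 : ℝ))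

/-- `Spin(n)`, the spin group of the standard quadratic form on `Fin n → ℝ`. -/
abbrev Spin (n : ℕ) : Type :=
  ↥(spinGroup (Qn n))

/-- `ρ` is a standard-representation homomorphism for `r : Γ →* Spin(n)` if
`ι(ρ(γ)(v)) = r(γ)·ι(v)·r(γ)⁻¹` for all `γ` and `v`. -/
def IsStdRep {Γ : Type*} [Group Γ] {n : ℕ} (r : Γ →* Spin n)
    (ρ : Γ →* ((Fin n → ℝ) ≃ₗ[ℝ] (Fin n → ℝ))) : Prop :=
  ∀ (γ : Γ) (v : Fin n → ℝ),
    CliffordAlgebra.ι (Qn n) (ρ γ v) =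
      ((r γ : Spin n) : CliffordAlgebra (Qn n)) * CliffordAlgebra.ι (Qn n) v *
        (((r γ)⁻¹ : Spin n) : CliffordAlgebra (Qn n))

namespace SpinConjAux

open CliffordAlgebra

variable {n : ℕ}

noncomputable def en (n : ℕ) (j : Fin n) : Fin n → ℝ := Pi.single j 1

noncomputable def Pl (n : ℕ) (l : List (Fin n → ℝ)) : CliffordAlgebra (Qn n) :=
  (l.map (ι (Qn n))).prod

@[simp] lemma Pl_nil : Pl n [] = 1 := rfl

@[simp] lemma Pl_cons (v : Fin n → ℝ) (l : List (Fin n → ℝ)) :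
    Pl n (v :: l) = ι (Qn n) v * Pl n l := by simp [Pl]

@[simp] lemma Pl_append (l₁ l₂ : List (Fin n → ℝ)) :
    Pl n (l₁ ++ l₂) = Pl n l₁ * Pl n l₂ := by simp [Pl]

lemma Qn_apply (v : Fin n → ℝ) : Qn n v = ∑ i, v i * v i := by
  simp [Qn, smul_eq_mul]

lemma Qn_en (j : Fin n) : Qn n (en n j) = 1 := by
  simp [Qn_apply, en, Pi.single_apply]

lemma Qn_pos {v : Fin n → ℝ} (hv : v ≠ 0) : 0 < Qn n v := by
  rw [Qn_apply]
  obtain ⟨i, hi⟩ : ∃ i, v i ≠ 0 := by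
    by_contra h; push_neg at h; exact hv (funext h)
  exact Finset.sum_pos' (fun j _ => mul_self_nonneg _)
    ⟨i, Finset.mem_univ i, mul_self_pos.mpr hi⟩

lemma polar_en {i j : Fin n} (h : i ≠ j) :
    QuadraticMap.polar (Qn n) (en n i) (en n j) = 0 := by
  simp only [QuadraticMap.polar, Qn_apply, Pi.add_apply, en, Pi.single_apply]
  rw [← Finset.sum_sub_distrib, ← Finset.sum_sub_distrib]
  refine Finset.sum_eq_zero fun k _ => ?_
  rcases eq_or_ne k i with rfl | hki
  · simp [h]
  · rcases eq_or_ne k j with rfl | hkj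
    · simp [hki]
    · simp [hki, hkj]

lemma anticomm {u v : Fin n → ℝ} (h : QuadraticMap.polar (Qn n) u v = 0) :
    ι (Qn n) u * ι (Qn n) v = -(ι (Qn n) v * ι (Qn n) u) := by
  have h2 := ι_mul_ι_add_swap (Q := Qn n) u v
  rw [h, map_zero] at h2
  exact eq_neg_of_add_eq_zero_left h2

lemma pass (u : Fin n → ℝ) :
    ∀ l : List (Fin n → ℝ), (∀ x ∈ l, QuadraticMap.polar (Qn n) x u = 0) →
      ι (Qn n) u * Pl n l = ((-1 : ℝ) ^ l.length) • (Pl n l * ι (Qn n) u)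
  | [], _ => by simp
  | x :: l, h => by
    have hx : ι (Qn n) u * ι (Qn n) x = -(ι (Qn n) x * ι (Qn n) u) := by
      have h3 := anticomm (u := x) (v := u) (h x (List.mem_cons_self))
      rw [h3, neg_neg]
    rw [Pl_cons, ← mul_assoc, hx, neg_mul, mul_assoc,
      pass u l (fun y hy => h y (List.mem_cons_of_mem x hy)),
      List.length_cons, mul_smul_comm, mul_assoc ((ι (Qn n)) x),
      ← neg_smul, ← neg_one_mul ((-1:ℝ) ^ l.length), ← pow_succ']

lemma involute_Pl :
    ∀ l : List (Fin n → ℝ), involute (Pl n l) = ((-1 : ℝ) ^ l.length) • Pl n l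
  | [] => by simp
  | x :: l => by
    rw [Pl_cons, map_mul, involute_ι, involute_Pl l, List.length_cons,
      neg_mul, mul_smul_comm, ← neg_smul, ← neg_one_mul ((-1:ℝ) ^ l.length), ← pow_succ']

lemma ι_sq_one {v : Fin n → ℝ} (hv : Qn n v = 1) :
    ι (Qn n) v * ι (Qn n) v = 1 := by
  rw [ι_sq_scalar, hv, map_one]

lemma isUnit_ι_of_Q_eq_one {v : Fin n → ℝ} (hv : Qn n v = 1) : IsUnit (ι (Qn n) v) :=
  ⟨⟨ι (Qn n) v, ι (Qn n) v, ι_sq_one hv, ι_sq_one hv⟩, rfl⟩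

lemma isUnit_Pl_en : ∀ l : List (Fin n), IsUnit (Pl n (l.map (en n)))
  | [] => by simp
  | j :: l => by
    rw [List.map_cons, Pl_cons]
    exact (isUnit_ι_of_Q_eq_one (Qn_en j)).mul (isUnit_Pl_en l)

/-! ### Finite-dimensionality -/

noncomputable def genSet (n : ℕ) : Set (CliffordAlgebra (Qn n)) :=
  (fun l : List (Fin n) => Pl n (l.map (en n))) '' {l | l.Nodup}

lemma genSet_finite : (genSet n).Finite :=
  Set.Finite.image _ <| Set.Finite.subset (List.finite_length_le (Fin n) n)
    (fun l hl => by simpa using List.Nodup.length_le_card hl)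

lemma one_mem_genSet : (1 : CliffordAlgebra (Qn n)) ∈ genSet n :=
  ⟨[], List.nodup_nil, rfl⟩

lemma mul_en_genSet (j : Fin n) {x : CliffordAlgebra (Qn n)} (hx : x ∈ genSet n) :
    ι (Qn n) (en n j) * x ∈ Submodule.span ℝ (genSet n) := by
  obtain ⟨l, hl, rfl⟩ := hx
  beta_reduce
  by_cases hj : j ∈ l
  · obtain ⟨l₁, l₂, rfl⟩ := List.append_of_mem hj
    have hj1 : j ∉ l₁ := fun hmem =>
      (List.disjoint_of_nodup_append hl) hmem List.mem_cons_self
    have hnd : (l₁ ++ l₂).Nodup :=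
      List.Nodup.sublist ((List.sublist_cons_self j l₂).append_left l₁) hl
    have h1 : ∀ x ∈ l₁.map (en n), QuadraticMap.polar (Qn n) x (en n j) = 0 := by
      rintro x hx
      obtain ⟨i, hi, rfl⟩ := List.mem_map.mp hx
      exact polar_en (fun hij => hj1 (hij ▸ hi))
    have hsplit : Pl n ((l₁ ++ j :: l₂).map (en n)) =
        Pl n (l₁.map (en n)) * (ι (Qn n) (en n j) * Pl n (l₂.map (en n))) := by
      simp [List.map_append]
    rw [hsplit, ← mul_assoc, pass (en n j) (l₁.map (en n)) h1, smul_mul_assoc,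
      mul_assoc, ← mul_assoc (ι (Qn n) (en n j)), ι_sq_one (Qn_en j), one_mul,
      ← Pl_append, ← List.map_append]
    exact Submodule.smul_mem _ _ (Submodule.subset_span ⟨l₁ ++ l₂, hnd, rfl⟩)
  · have : ι (Qn n) (en n j) * Pl n (l.map (en n)) = Pl n ((j :: l).map (en n)) := by
      simp
    rw [this]
    exact Submodule.subset_span ⟨j :: l, List.nodup_cons.mpr ⟨hj, hl⟩, rfl⟩

lemma en_expand (v : Fin n → ℝ) : v = ∑ i, v i • en n i := by
  ext k
  simp [en, Pi.single_apply]

lemma mul_mem_span_genSet (v : Fin n → ℝ) {x : CliffordAlgebra (Qn n)}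
    (hx : x ∈ Submodule.span ℝ (genSet n)) :
    ι (Qn n) v * x ∈ Submodule.span ℝ (genSet n) := by
  have hbase : ∀ j : Fin n, ∀ y ∈ Submodule.span ℝ (genSet n),
      ι (Qn n) (en n j) * y ∈ Submodule.span ℝ (genSet n) := by
    intro j y hy
    induction hy using Submodule.span_induction with
    | mem z hz => exact mul_en_genSet j hz
    | zero => simp
    | add a b _ _ ha hb => rw [mul_add]; exact Submodule.add_mem _ ha hb
    | smul c a _ ha => rw [mul_smul_comm]; exact Submodule.smul_mem _ _ ha
  have hv : ι (Qn n) v = ∑ i, v i • ι (Qn n) (en n i) := by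
    conv_lhs => rw [en_expand v]
    rw [map_sum]
    simp
  rw [hv, Finset.sum_mul]
  exact Submodule.sum_mem _ fun i _ => by
    rw [smul_mul_assoc]; exact Submodule.smul_mem _ _ (hbase i x hx)

lemma span_genSet_eq_top : Submodule.span ℝ (genSet n) = ⊤ := by
  rw [eq_top_iff]
  rintro x -
  have main : x ∈ Submodule.span ℝ (genSet n) ∧
      ∀ y ∈ Submodule.span ℝ (genSet n), x * y ∈ Submodule.span ℝ (genSet n) := by
    induction x using CliffordAlgebra.induction with
    | algebraMap r =>
      constructor
      · rw [Algebra.algebraMap_eq_smul_one]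
        exact Submodule.smul_mem _ _ (Submodule.subset_span one_mem_genSet)
      · intro y hy
        rw [Algebra.algebraMap_eq_smul_one, smul_mul_assoc, one_mul]
        exact Submodule.smul_mem _ _ hy
    | ι v =>
      constructor
      · rw [← mul_one (ι (Qn n) v)]
        exact mul_mem_span_genSet v (Submodule.subset_span one_mem_genSet)
      · exact fun y hy => mul_mem_span_genSet v hy
    | mul a b ha hb =>
      refine ⟨?_, fun y hy => ?_⟩
      · exact ha.2 b hb.1
      · rw [mul_assoc]; exact ha.2 _ (hb.2 y hy)
    | add a b ha hb =>
      refine ⟨Submodule.add_mem _ ha.1 hb.1, fun y hy => ?_⟩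
      rw [add_mul]
      exact Submodule.add_mem _ (ha.2 y hy) (hb.2 y hy)
  exact main.1

instance : Module.Finite ℝ (CliffordAlgebra (Qn n)) :=
  Module.finite_def.mpr ⟨(genSet_finite (n := n)).toFinset, by
    rw [Set.Finite.coe_toFinset, span_genSet_eq_top]⟩

/-! ### The trace functional -/

instance : Nontrivial (CliffordAlgebra (Qn n)) :=
  letI : Invertible (2 : ℝ) := invertibleOfNonzero two_ne_zero
  inferInstance

noncomputable def τ (n : ℕ) : CliffordAlgebra (Qn n) →ₗ[ℝ] ℝ :=
  (LinearMap.trace ℝ _).comp (Algebra.lmul ℝ (CliffordAlgebra (Qn n))).toLinearMap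

lemma τ_apply (x : CliffordAlgebra (Qn n)) :
    τ n x = LinearMap.trace ℝ _ (Algebra.lmul ℝ (CliffordAlgebra (Qn n)) x) := rfl

lemma τ_mul_comm (x y : CliffordAlgebra (Qn n)) : τ n (x * y) = τ n (y * x) := by
  rw [τ_apply, τ_apply, map_mul (Algebra.lmul ℝ (CliffordAlgebra (Qn n))),
    map_mul (Algebra.lmul ℝ (CliffordAlgebra (Qn n))), LinearMap.trace_mul_comm]

lemma τ_one : τ n 1 = (Module.finrank ℝ (CliffordAlgebra (Qn n)) : ℝ) := by
  rw [τ_apply, map_one, LinearMap.trace_one]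

lemma τ_one_ne_zero : τ n 1 ≠ 0 := by
  rw [τ_one]
  exact Nat.cast_ne_zero.mpr (Module.finrank_pos (R := ℝ)
    (M := CliffordAlgebra (Qn n))).ne'

lemma τ_involute (x : CliffordAlgebra (Qn n)) : τ n (involute x) = τ n x := by
  let E : CliffordAlgebra (Qn n) ≃ₗ[ℝ] CliffordAlgebra (Qn n) :=
    { toFun := involute
      map_add' := fun a b => map_add _ a b
      map_smul' := fun c a => map_smul (involute (Q := Qn n)) c a
      invFun := involute
      left_inv := involute_involute
      right_inv := involute_involute }
  have h : Algebra.lmul ℝ (CliffordAlgebra (Qn n)) (involute x) =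
      E.conj (Algebra.lmul ℝ (CliffordAlgebra (Qn n)) x) := by
    apply LinearMap.ext
    intro y
    simp only [LinearEquiv.conj_apply, LinearMap.comp_apply, LinearEquiv.coe_coe]
    show involute x * y = E ((Algebra.lmul ℝ _ x) (E.symm y))
    show involute x * y = involute (x * (E.symm y))
    show involute x * y = involute (x * involute y)
    rw [map_mul, involute_involute]
  rw [τ_apply, h, LinearMap.trace_conj', τ_apply]

/-! ### The moving lemma and the main contradiction -/

lemma move (s : CliffordAlgebra (Qn n)) :
    ∀ (t p : List (Fin n → ℝ)) (u : Fin n → ℝ),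
      (∀ l' : List (Fin n → ℝ), l'.length + 1 = p.length + t.length →
        τ n (s * Pl n l') = 0) →
      τ n (s * Pl n p * (Pl n t * ι (Qn n) u)) =
        (-1 : ℝ) ^ t.length * τ n (s * Pl n p * (ι (Qn n) u * Pl n t))
  | [], p, u, _ => by simp
  | w :: t, p, u, hvan => by
    have hvan' : ∀ l' : List (Fin n → ℝ), l'.length + 1 = (p ++ [w]).length + t.length →
        τ n (s * Pl n l') = 0 := by
      intro l' hl'
      apply hvan
      simp at hl' ⊢
      omega
    have step := move s t (p ++ [w]) u hvan'
    have hvt : τ n (s * Pl n (p ++ t)) = 0 := by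
      apply hvan
      simp
      omega
    have hc : ι (Qn n) w * ι (Qn n) u
        = algebraMap ℝ _ (QuadraticMap.polar (Qn n) w u) - ι (Qn n) u * ι (Qn n) w :=
      ι_mul_ι_comm w u
    calc τ n (s * Pl n p * (Pl n (w :: t) * ι (Qn n) u))
        = τ n (s * Pl n (p ++ [w]) * (Pl n t * ι (Qn n) u)) := by
          simp only [Pl_cons, Pl_append, Pl_nil, mul_one, mul_assoc]
      _ = (-1 : ℝ) ^ t.length * τ n (s * Pl n (p ++ [w]) * (ι (Qn n) u * Pl n t)) := step
      _ = (-1 : ℝ) ^ t.length * τ n (s * Pl n p * ((ι (Qn n) w * ι (Qn n) u) * Pl n t)) := by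
          simp only [Pl_cons, Pl_append, Pl_nil, mul_one, mul_assoc]
      _ = (-1 : ℝ) ^ t.length * (QuadraticMap.polar (Qn n) w u * τ n (s * Pl n (p ++ t))
            - τ n (s * Pl n p * (ι (Qn n) u * Pl n (w :: t)))) := by
          congr 1
          rw [hc, sub_mul, mul_sub, map_sub]
          congr 1
          · rw [← Algebra.smul_def, mul_smul_comm, map_smul, smul_eq_mul, mul_assoc, ← Pl_append]
          · simp only [Pl_cons, mul_assoc]
      _ = (-1 : ℝ) ^ (w :: t).length * τ n (s * Pl n p * (ι (Qn n) u * Pl n (w :: t))) := by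
          rw [hvt, mul_zero, zero_sub, List.length_cons, pow_succ]
          ring

lemma list_map_of_range (l : List (CliffordAlgebra (Qn n))) :
    (∀ y ∈ l, y ∈ Set.range (ι (Qn n))) →
      ∃ l' : List (Fin n → ℝ), l = l'.map (ι (Qn n)) := by
  induction l with
  | nil => exact fun _ => ⟨[], rfl⟩
  | cons a l ih =>
    intro h
    obtain ⟨l', rfl⟩ := ih (fun y hy => h y (List.mem_cons_of_mem a hy))
    obtain ⟨v, rfl⟩ := h a (List.mem_cons_self)
    exact ⟨v :: l', rfl⟩

lemma main_contradiction
    (s : CliffordAlgebra (Qn n)) (hs : IsUnit s)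
    (R : (Fin n → ℝ) ≃ₗ[ℝ] (Fin n → ℝ))
    (hcomm : ∀ v, s * ι (Qn n) v = ι (Qn n) (R v) * s)
    (ε : ℝ) (hε : ε = 1 ∨ ε = -1)
    (hinv : involute s = (-ε) • s)
    (hτ : τ n s = 0)
    (heig : ∀ v, R v = ε • v → v = 0) : False := by
  have hε2 : ε * ε = 1 := by rcases hε with rfl | rfl <;> norm_num
  set f : (Fin n → ℝ) →ₗ[ℝ] (Fin n → ℝ) := R.symm.toLinearMap - ε • LinearMap.id with hf
  have hker : ∀ v, f v = 0 → v = 0 := by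
    intro v hv
    simp only [hf, LinearMap.sub_apply, LinearMap.smul_apply, LinearMap.id_apply,
      LinearEquiv.coe_coe] at hv
    have h1 : R.symm v = ε • v := sub_eq_zero.mp hv
    have h2 : v = ε • R v := by
      have h3 := congrArg R h1
      rwa [LinearEquiv.apply_symm_apply, map_smul] at h3
    have h3 : R v = ε • v := by
      calc R v = (ε * ε) • R v := by rw [hε2, one_smul]
        _ = ε • (ε • R v) := by rw [mul_smul]
        _ = ε • v := by rw [← h2]
    exact heig v h3
  have hinj : Function.Injective f := by
    rw [← LinearMap.ker_eq_bot]
    exact LinearMap.ker_eq_bot'.mpr hker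
  have hsurj : Function.Surjective f := LinearMap.injective_iff_surjective.mp hinj
  have key : ∀ k, ∀ l : List (Fin n → ℝ), l.length = k → τ n (s * Pl n l) = 0 := by
    intro k
    induction k using Nat.strong_induction_on with
    | _ k IH =>
    intro l hl
    rcases eq_or_ne ((-1 : ℝ) ^ k) ε with hpar | hpar
    · have h1 : τ n (s * Pl n l) = τ n (involute (s * Pl n l)) := (τ_involute _).symm
      rw [map_mul (involute (Q := Qn n)) s (Pl n l), hinv, involute_Pl, hl, hpar, smul_mul_assoc, mul_smul_comm, smul_smul,
        map_smul, smul_eq_mul] at h1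
      have hne : (-ε) * ε = -1 := by rw [neg_mul, hε2]
      rw [hne] at h1
      linarith
    · have hpar2 : (-1 : ℝ) ^ k = -ε := by
        rcases Nat.even_or_odd k with hk | hk
        · rw [hk.neg_one_pow] at hpar ⊢
          rcases hε with rfl | rfl
          · exact absurd rfl hpar
          · norm_num
        · rw [hk.neg_one_pow] at hpar ⊢
          rcases hε with rfl | rfl
          · norm_num
          · exact absurd rfl hpar
      rcases l with _ | ⟨u, t⟩
      · simpa using hτ
      · have hk1 : k = t.length + 1 := by
          simp only [List.length_cons] at hl
          omega
        have hvan : ∀ l' : List (Fin n → ℝ),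
            l'.length + 1 = ([] : List (Fin n → ℝ)).length + t.length →
            τ n (s * Pl n l') = 0 := by
          intro l' hl'
          simp only [List.length_nil, zero_add] at hl'
          exact IH l'.length (by omega) l' rfl
        have hsign : (-1 : ℝ) ^ t.length = ε := by
          rw [hk1, pow_succ] at hpar2
          linarith
        set φ : (Fin n → ℝ) →ₗ[ℝ] ℝ :=
          (τ n).comp ((LinearMap.mulRight ℝ (Pl n t)).comp
            ((LinearMap.mulLeft ℝ s).comp (ι (Qn n)))) with hφ
        have hφ_apply : ∀ w, φ w = τ n (s * ι (Qn n) w * Pl n t) := fun w => rfl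
        have hstep : ∀ w, φ (R.symm w) = ε * φ w := by
          intro w
          rw [hφ_apply, hφ_apply]
          have h1 : s * ι (Qn n) (R.symm w) = ι (Qn n) w * s := by
            have h2 := hcomm (R.symm w)
            rwa [LinearEquiv.apply_symm_apply] at h2
          have hmvw := move s t [] w hvan
          simp only [Pl_nil, mul_one] at hmvw
          calc τ n (s * ι (Qn n) (R.symm w) * Pl n t)
              = τ n (ι (Qn n) w * s * Pl n t) := by rw [h1]
            _ = τ n (ι (Qn n) w * (s * Pl n t)) := by rw [mul_assoc]
            _ = τ n ((s * Pl n t) * ι (Qn n) w) := τ_mul_comm _ _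
            _ = τ n (s * (Pl n t * ι (Qn n) w)) := by rw [mul_assoc]
            _ = (-1 : ℝ) ^ t.length * τ n (s * (ι (Qn n) w * Pl n t)) := hmvw
            _ = ε * τ n (s * ι (Qn n) w * Pl n t) := by rw [hsign, mul_assoc]
        have hzero : ∀ w, φ w = 0 := by
          intro w
          obtain ⟨u', hu'⟩ := hsurj w
          have hfu : f u' = R.symm u' - ε • u' := by
            simp [hf, LinearMap.sub_apply, LinearMap.smul_apply, LinearMap.id_apply,
              LinearEquiv.coe_coe]
          have hz : φ (R.symm u' - ε • u') = 0 := by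
            rw [map_sub, map_smul, hstep u', smul_eq_mul]
            ring
          rw [← hu', hfu]
          exact hz
        have hfin : τ n (s * Pl n (u :: t)) = φ u := by
          rw [hφ_apply]
          simp only [Pl_cons, mul_assoc]
        rw [hfin, hzero]
  have hall : ∀ x, τ n (s * x) = 0 := by
    have hadj : Algebra.adjoin ℝ (Set.range (ι (Qn n))) = ⊤ := by
      rw [eq_top_iff]
      rintro y -
      induction y using CliffordAlgebra.induction with
      | algebraMap r => exact Subalgebra.algebraMap_mem _ r
      | ι v => exact Algebra.subset_adjoin ⟨v, rfl⟩
      | mul a b ha hb => exact mul_mem ha hb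
      | add a b ha hb => exact add_mem ha hb
    intro x
    have hx : x ∈ Submodule.span ℝ
        ((Submonoid.closure (Set.range (ι (Qn n))) : Submonoid _) : Set _) := by
      rw [← Algebra.adjoin_eq_span, Subalgebra.mem_toSubmodule, hadj]
      trivial
    induction hx using Submodule.span_induction with
    | mem z hz =>
      obtain ⟨l, hl, rfl⟩ := Submonoid.exists_list_of_mem_closure hz
      obtain ⟨l', rfl⟩ := list_map_of_range l hl
      have := key l'.length l' rfl
      simpa [Pl] using this
    | zero => simp
    | add a b _ _ ha hb => rw [mul_add, map_add, ha, hb, add_zero]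
    | smul c a _ ha => rw [mul_smul_comm, map_smul, ha, smul_zero]
  obtain ⟨U, hU⟩ := hs
  have h1 : τ n (1 : CliffordAlgebra (Qn n)) = 0 := by
    have h2 := hall (↑U⁻¹)
    rwa [← hU, Units.mul_inv] at h2
  exact τ_one_ne_zero h1

/-! ### The volume element -/

noncomputable def ω (n : ℕ) : CliffordAlgebra (Qn n) :=
  Pl n ((List.finRange n).map (en n))

lemma ω_unit : IsUnit (ω n) := isUnit_Pl_en _

lemma involute_ω (hodd : Odd n) : involute (ω n) = -ω n := by
  rw [ω, involute_Pl]
  simp only [List.length_map, List.length_finRange]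
  rw [hodd.neg_one_pow, neg_one_smul]

lemma ω_comm_en (hodd : Odd n) (j : Fin n) :
    ι (Qn n) (en n j) * ω n = ω n * ι (Qn n) (en n j) := by
  obtain ⟨l₁, l₂, hsplit⟩ := List.append_of_mem (List.mem_finRange j)
  have hnd : (l₁ ++ j :: l₂).Nodup := hsplit ▸ List.nodup_finRange n
  have hj1 : j ∉ l₁ := fun hmem =>
    (List.disjoint_of_nodup_append hnd) hmem List.mem_cons_self
  have hj2 : j ∉ l₂ := by
    have h := List.Nodup.of_append_right hnd
    exact (List.nodup_cons.mp h).1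
  have hlen : l₁.length + l₂.length + 1 = n := by
    have hc := congrArg List.length hsplit
    simp at hc
    omega
  have h1 : ∀ x ∈ l₁.map (en n), QuadraticMap.polar (Qn n) x (en n j) = 0 := by
    rintro x hx
    obtain ⟨i, hi, rfl⟩ := List.mem_map.mp hx
    exact polar_en (fun hij => hj1 (hij ▸ hi))
  have h2 : ∀ x ∈ l₂.map (en n), QuadraticMap.polar (Qn n) x (en n j) = 0 := by
    rintro x hx
    obtain ⟨i, hi, rfl⟩ := List.mem_map.mp hx
    exact polar_en (fun hij => hj2 (hij ▸ hi))
  have hω : ω n = Pl n (l₁.map (en n)) * (ι (Qn n) (en n j) * Pl n (l₂.map (en n))) := by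
    rw [ω, hsplit]
    simp [List.map_append]
  have p1 := pass (en n j) (l₁.map (en n)) h1
  have p2 := pass (en n j) (l₂.map (en n)) h2
  have hsgn : ((-1 : ℝ) ^ (l₁.map (en n)).length) = ((-1 : ℝ) ^ (l₂.map (en n)).length) := by
    simp only [List.length_map]
    obtain ⟨m, hm⟩ := hodd
    rcases Nat.even_or_odd l₁.length with h | h
    · have h' : Even l₂.length := by
        rw [Nat.even_iff] at h ⊢
        omega
      rw [h.neg_one_pow, h'.neg_one_pow]
    · have h' : Odd l₂.length := by
        rw [Nat.odd_iff] at h ⊢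
        omega
      rw [h.neg_one_pow, h'.neg_one_pow]
  calc ι (Qn n) (en n j) * ω n
      = (ι (Qn n) (en n j) * Pl n (l₁.map (en n))) * (ι (Qn n) (en n j) * Pl n (l₂.map (en n))) := by
        rw [hω, ← mul_assoc]
    _ = ((-1 : ℝ) ^ (l₁.map (en n)).length) •
        (Pl n (l₁.map (en n)) * Pl n (l₂.map (en n))) := by
        rw [p1, smul_mul_assoc, mul_assoc, ← mul_assoc (ι (Qn n) (en n j)),
          ι_sq_one (Qn_en j), one_mul]
    _ = ((-1 : ℝ) ^ (l₂.map (en n)).length) •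
        (Pl n (l₁.map (en n)) * Pl n (l₂.map (en n))) := by rw [hsgn]
    _ = ω n * ι (Qn n) (en n j) := by
        rw [hω, mul_assoc, p2, smul_mul_assoc, mul_smul_comm,
          mul_assoc (Pl n (l₂.map (en n))), ι_sq_one (Qn_en j), mul_one]

lemma ω_comm (hodd : Odd n) (v : Fin n → ℝ) :
    ι (Qn n) v * ω n = ω n * ι (Qn n) v := by
  have hv : ι (Qn n) v = ∑ i, v i • ι (Qn n) (en n i) := by
    conv_lhs => rw [en_expand v]
    rw [map_sum]
    simp
  rw [hv, Finset.sum_mul, Finset.mul_sum]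
  exact Finset.sum_congr rfl fun i _ => by
    rw [smul_mul_assoc, mul_smul_comm, ω_comm_en hodd i]

lemma exists_fixed (hodd : Odd n)
    (rr : CliffordAlgebra (Qn n)) (hr : IsUnit rr)
    (R : (Fin n → ℝ) ≃ₗ[ℝ] (Fin n → ℝ))
    (hcomm : ∀ v, rr * ι (Qn n) v = ι (Qn n) (R v) * rr)
    (heven : involute rr = rr) :
    ∃ w : Fin n → ℝ, w ≠ 0 ∧ R w = w := by
  by_contra hcon
  push_neg at hcon
  have heig : ∀ w, R w = (1 : ℝ) • w → w = 0 := by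
    intro w hw
    by_contra h0
    exact hcon w h0 (by simpa using hw)
  have hI : involute (ω n * rr) = -(ω n * rr) := by
    rw [map_mul (involute (Q := Qn n)) (ω n) rr, involute_ω hodd, heven, neg_mul]
  refine main_contradiction (ω n * rr) (ω_unit.mul hr) R ?_ 1 (Or.inl rfl) ?_ ?_ heig
  · intro v
    rw [mul_assoc, hcomm v, ← mul_assoc, ← ω_comm hodd (R v), mul_assoc]
  · rw [hI, ← neg_one_smul ℝ (ω n * rr)]
  · have h2 : τ n (ω n * rr) = τ n (involute (ω n * rr)) := (τ_involute _).symm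
    rw [hI, map_neg] at h2
    linarith

end SpinConjAux

open SpinConjAux CliffordAlgebra

/-- For `n` odd, a character `η : Γ → {±1}` satisfies: `r(γ)` and `η(γ) • r(γ)` are conjugate
in `Spin(n)` for all `γ` if and only if `η(γ)` is an eigenvalue of `ρ(γ)` for all `γ`. -/
theorem elementConjugate_twist_iff_eigenvalue
    {Γ : Type*} [Group Γ] (n : ℕ) (hn : 1 ≤ n) (hodd : Odd n)
    (r : Γ →* Spin n) (ρ : Γ →* ((Fin n → ℝ) ≃ₗ[ℝ] (Fin n → ℝ))) (hρ : IsStdRep r ρ)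
    (η : Γ →* ℝˣ) (hη : ∀ γ : Γ, η γ = 1 ∨ η γ = -1) :
    (∀ γ : Γ, ∃ g : Spin n,
        ((g * r γ * g⁻¹ : Spin n) : CliffordAlgebra (Qn n)) =
          ((η γ : ℝˣ) : ℝ) • ((r γ : Spin n) : CliffordAlgebra (Qn n))) ↔
      (∀ γ : Γ, ∃ v : Fin n → ℝ, v ≠ 0 ∧ ρ γ v = ((η γ : ℝˣ) : ℝ) • v) := by
  have hmulinv : ∀ g : Spin n,
      (g : CliffordAlgebra (Qn n)) * ((g⁻¹ : Spin n) : CliffordAlgebra (Qn n)) = 1 := by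
    intro g
    rw [← MulMemClass.coe_mul, mul_inv_cancel]
    rfl
  have hinvmul : ∀ g : Spin n,
      ((g⁻¹ : Spin n) : CliffordAlgebra (Qn n)) * (g : CliffordAlgebra (Qn n)) = 1 := by
    intro g
    rw [← MulMemClass.coe_mul, inv_mul_cancel]
    rfl
  have hrunit : ∀ γ : Γ, IsUnit ((r γ : Spin n) : CliffordAlgebra (Qn n)) := fun γ =>
    ⟨⟨_, _, hmulinv (r γ), hinvmul (r γ)⟩, rfl⟩
  have hcommr : ∀ γ : Γ, ∀ v,
      ((r γ : Spin n) : CliffordAlgebra (Qn n)) * ι (Qn n) v =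
        ι (Qn n) (ρ γ v) * ((r γ : Spin n) : CliffordAlgebra (Qn n)) := by
    intro γ v
    rw [hρ γ v, mul_assoc, mul_assoc, hinvmul (r γ), mul_one]
  have hevenr : ∀ γ : Γ,
      involute ((r γ : Spin n) : CliffordAlgebra (Qn n)) = (r γ : Spin n) :=
    fun γ => spinGroup.involute_eq (r γ).2
  constructor
  · intro hconj γ
    rcases hη γ with hη1 | hη1
    · obtain ⟨w, hw0, hww⟩ := exists_fixed hodd _ (hrunit γ) (ρ γ) (hcommr γ) (hevenr γ)
      refine ⟨w, hw0, ?_⟩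
      rw [hη1]
      simpa using hww
    · obtain ⟨g, hg⟩ := hconj γ
      rw [hη1] at hg
      have hg' : (g : CliffordAlgebra (Qn n)) * ((r γ : Spin n) : CliffordAlgebra (Qn n)) *
          ((g⁻¹ : Spin n) : CliffordAlgebra (Qn n)) =
          -((r γ : Spin n) : CliffordAlgebra (Qn n)) := by
        simpa [MulMemClass.coe_mul, Units.val_neg, Units.val_one] using hg
      have hτ0 : τ n ((r γ : Spin n) : CliffordAlgebra (Qn n)) = 0 := by
        have h2 : τ n ((g : CliffordAlgebra (Qn n)) *
            (((r γ : Spin n) : CliffordAlgebra (Qn n)) * ((g⁻¹ : Spin n) : _))) =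
            τ n ((((r γ : Spin n) : CliffordAlgebra (Qn n)) * ((g⁻¹ : Spin n) : _)) *
              (g : CliffordAlgebra (Qn n))) := τ_mul_comm _ _
        rw [← mul_assoc, hg', mul_assoc, hinvmul g, mul_one, map_neg] at h2
        linarith
      rw [hη1]
      simp only [Units.val_neg, Units.val_one]
      by_contra hcon
      push_neg at hcon
      have heig : ∀ v, ρ γ v = (-1 : ℝ) • v → v = 0 := by
        intro v hv
        by_contra h0
        exact hcon v h0 hv
      exact main_contradiction _ (hrunit γ) (ρ γ) (hcommr γ) (-1) (Or.inr rfl)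
        (by rw [neg_neg, one_smul]; exact hevenr γ) hτ0 heig
  · intro heigen γ
    rcases hη γ with hη1 | hη1
    · refine ⟨1, ?_⟩
      rw [hη1]
      simp
    · obtain ⟨v, hv0, hveq⟩ := heigen γ
      rw [hη1] at hveq
      simp only [Units.val_neg, Units.val_one] at hveq
      obtain ⟨w, hw0, hweq⟩ := exists_fixed hodd _ (hrunit γ) (ρ γ) (hcommr γ) (hevenr γ)
      set cv := (Real.sqrt (Qn n v))⁻¹ with hcv
      set cw := (Real.sqrt (Qn n w))⁻¹ with hcw
      set v' := cv • v with hv'def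
      set w' := cw • w with hw'def
      have hsv := Real.sq_sqrt (Qn_pos hv0).le
      have hsw := Real.sq_sqrt (Qn_pos hw0).le
      have hsvne : Real.sqrt (Qn n v) ≠ 0 := Real.sqrt_ne_zero'.mpr (Qn_pos hv0)
      have hswne : Real.sqrt (Qn n w) ≠ 0 := Real.sqrt_ne_zero'.mpr (Qn_pos hw0)
      have hQv' : Qn n v' = 1 := by
        rw [hv'def, QuadraticMap.map_smul, smul_eq_mul, hcv]
        field_simp
        nlinarith [hsv]
      have hQw' : Qn n w' = 1 := by
        rw [hw'def, QuadraticMap.map_smul, smul_eq_mul, hcw]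
        field_simp
        nlinarith [hsw]
      have hveq' : ρ γ v' = -v' := by
        rw [hv'def, map_smul, hveq, smul_smul, mul_neg_one, neg_smul]
      have hweq' : ρ γ w' = w' := by
        rw [hw'def, map_smul, hweq]
      have hrv : ι (Qn n) v' * ((r γ : Spin n) : CliffordAlgebra (Qn n)) =
          -(((r γ : Spin n) : CliffordAlgebra (Qn n)) * ι (Qn n) v') := by
        have h := hcommr γ v'
        rw [hveq', map_neg, neg_mul] at h
        rw [h, neg_neg]
      have hrw : ((r γ : Spin n) : CliffordAlgebra (Qn n)) * ι (Qn n) w' =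
          ι (Qn n) w' * ((r γ : Spin n) : CliffordAlgebra (Qn n)) := by
        have h := hcommr γ w'
        rwa [hweq'] at h
      set G : CliffordAlgebra (Qn n) := ι (Qn n) v' * ι (Qn n) w' with hGdef
      have hGr : G * ((r γ : Spin n) : CliffordAlgebra (Qn n)) =
          -(((r γ : Spin n) : CliffordAlgebra (Qn n)) * G) := by
        rw [hGdef, mul_assoc, ← hrw, ← mul_assoc, hrv, neg_mul, mul_assoc]
      have hGinv : G * (ι (Qn n) w' * ι (Qn n) v') = 1 := by
        rw [hGdef, mul_assoc, ← mul_assoc (ι (Qn n) w'), ι_sq_one hQw', one_mul,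
          ι_sq_one hQv']
      have hinvG : (ι (Qn n) w' * ι (Qn n) v') * G = 1 := by
        rw [hGdef, mul_assoc, ← mul_assoc (ι (Qn n) v'), ι_sq_one hQv', one_mul,
          ι_sq_one hQw']
      have hGstar : star G = ι (Qn n) w' * ι (Qn n) v' := by
        rw [hGdef, star_mul, star_ι, star_ι, neg_mul_neg]
      have hGpin : G ∈ pinGroup (Qn n) := by
        refine pinGroup.mem_iff.mpr ⟨?_, ?_⟩
        · refine Submonoid.mem_map.mpr ?_
          refine ⟨(⟨ι (Qn n) v', ι (Qn n) v', ι_sq_one hQv', ι_sq_one hQv'⟩ :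
              (CliffordAlgebra (Qn n))ˣ) *
            ⟨ι (Qn n) w', ι (Qn n) w', ι_sq_one hQw', ι_sq_one hQw'⟩, ?_, rfl⟩
          exact mul_mem (Subgroup.subset_closure ⟨v', rfl⟩)
            (Subgroup.subset_closure ⟨w', rfl⟩)
        · refine Unitary.mem_iff.mpr ⟨?_, ?_⟩
          · rw [hGstar]; exact hinvG
          · rw [hGstar]; exact hGinv
      have hGeven : G ∈ CliffordAlgebra.even (Qn n) := by
        have h := ι_mul_ι_mem_evenOdd_zero (Qn n) v' w'
        rw [← Subalgebra.mem_toSubmodule, even_toSubmodule]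
        exact h
      have hGspin : G ∈ spinGroup (Qn n) := spinGroup.mem_iff.mpr ⟨hGpin, hGeven⟩
      refine ⟨⟨G, hGspin⟩, ?_⟩
      have hcoeinv : (((⟨G, hGspin⟩ : Spin n)⁻¹ : Spin n) : CliffordAlgebra (Qn n)) =
          ι (Qn n) w' * ι (Qn n) v' := by
        have h1 : (((⟨G, hGspin⟩ : Spin n)⁻¹ : Spin n) : CliffordAlgebra (Qn n)) * G = 1 :=
          hinvmul ⟨G, hGspin⟩
        calc (((⟨G, hGspin⟩ : Spin n)⁻¹ : Spin n) : CliffordAlgebra (Qn n))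
            = (((⟨G, hGspin⟩ : Spin n)⁻¹ : Spin n) : CliffordAlgebra (Qn n)) *
              (G * (ι (Qn n) w' * ι (Qn n) v')) := by rw [hGinv, mul_one]
          _ = ((((⟨G, hGspin⟩ : Spin n)⁻¹ : Spin n) : CliffordAlgebra (Qn n)) * G) *
              (ι (Qn n) w' * ι (Qn n) v') := (mul_assoc _ G _).symm
          _ = ι (Qn n) w' * ι (Qn n) v' := by rw [h1, one_mul]
      rw [hη1]
      have hcoeprod : ((⟨G, hGspin⟩ * r γ * (⟨G, hGspin⟩ : Spin n)⁻¹ : Spin n) :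
          CliffordAlgebra (Qn n)) =
          G * ((r γ : Spin n) : CliffordAlgebra (Qn n)) *
            (((⟨G, hGspin⟩ : Spin n)⁻¹ : Spin n) : CliffordAlgebra (Qn n)) := rfl
      rw [hcoeprod, hGr, neg_mul, mul_assoc, hcoeinv, hGinv, mul_one]
      simp
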